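/- For the polynomial algebra in n variables, the quotient ℂ[x₁,...,xₙ] / (ideal generated by symmetric polynomials without constant term) carries the regular representation of the symmetric group Σₙ; in particular its dimension is n!. -/

import Mathlib

open MvPolynomial


/-- The ideal of `ℂ[x₁,…,xₙ]` generated by the symmetric polynomials with zero constant
term. -/
noncomputable def symIdeal (n : ℕ) : Ideal (MvPolynomial (Fin n) ℂ) :=
  Ideal.span {p : MvPolynomial (Fin n) ℂ |
    (∀ σ : Equiv.Perm (Fin n), MvPolynomial.rename ⇑σ p = p) ∧
      MvPolynomial.constantCoeff p = 0}

namespace ChevAux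

variable {n : ℕ}

lemma degree_mapDomain (σ : Equiv.Perm (Fin n)) (β : Fin n →₀ ℕ) :
    (β.mapDomain ⇑σ).degree = β.degree := by
  classical
  have h : ∀ γ : Fin n →₀ ℕ, γ.degree = γ.sum fun _ m => m := fun γ => rfl
  rw [h, h, Finsupp.sum_mapDomain_index (fun _ => rfl) (fun _ _ _ => rfl)]

lemma hc_monomial (d : ℕ) (β : Fin n →₀ ℕ) (c : ℂ) :
    homogeneousComponent d (monomial β c) =
      if d = β.degree then monomial β c else 0 :=
  homogeneousComponent_of_mem ((mem_homogeneousSubmodule _ _).2 (isHomogeneous_monomial c rfl))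

lemma hc_rename (σ : Equiv.Perm (Fin n)) (d : ℕ) (p : MvPolynomial (Fin n) ℂ) :
    homogeneousComponent d (rename ⇑σ p) = rename ⇑σ (homogeneousComponent d p) := by
  induction p using MvPolynomial.induction_on' with
  | monomial β c =>
      rw [rename_monomial, hc_monomial, hc_monomial, degree_mapDomain]
      split <;> simp [rename_monomial]
  | add p q hp hq => simp [map_add, hp, hq]

lemma constantCoeff_mem_symIdeal {p : MvPolynomial (Fin n) ℂ}
    (hp : p ∈ symIdeal n) : constantCoeff p = 0 := by
  have : symIdeal n ≤ RingHom.ker (constantCoeff (R := ℂ) (σ := Fin n)) := by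
    rw [symIdeal, Ideal.span_le]
    rintro q ⟨-, hq⟩
    exact hq
  exact this hp

/-- Generating set for `symIdeal` as a `ℂ`-submodule: monomial multiples of
homogeneous symmetric polynomials of positive degree. -/
def T (n : ℕ) : Set (MvPolynomial (Fin n) ℂ) :=
  {q | ∃ (α : Fin n →₀ ℕ) (f : MvPolynomial (Fin n) ℂ) (j : ℕ),
        0 < j ∧ f.IsHomogeneous j ∧ (∀ σ : Equiv.Perm (Fin n), rename ⇑σ f = f) ∧
        q = monomial α 1 * f}

lemma T_subset_symIdeal : T n ⊆ symIdeal n := by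
  rintro q ⟨α, f, j, hj, hhom, hsym, rfl⟩
  apply Ideal.mul_mem_left
  apply Ideal.subset_span
  refine ⟨hsym, ?_⟩
  have := hhom.coeff_eq_zero (d := 0) (by simpa using hj.ne)
  simpa [constantCoeff_eq] using this

lemma mul_mem_spanT {q : MvPolynomial (Fin n) ℂ}
    (hq : q ∈ Submodule.span ℂ (T n)) (r : MvPolynomial (Fin n) ℂ) :
    r * q ∈ Submodule.span ℂ (T n) := by
  induction hq using Submodule.span_induction with
  | mem q hq =>
      obtain ⟨α, f, j, hj, hhom, hsym, rfl⟩ := hq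
      rw [MvPolynomial.as_sum r, Finset.sum_mul]
      refine Submodule.sum_mem _ fun β hβ => ?_
      have : monomial β (coeff β r) * (monomial α 1 * f)
          = coeff β r • (monomial (β + α) 1 * f) := by
        rw [← mul_assoc, monomial_mul, ← smul_mul_assoc, smul_monomial, smul_eq_mul, mul_one]
      rw [this]
      exact Submodule.smul_mem _ _ (Submodule.subset_span ⟨β + α, f, j, hj, hhom, hsym, rfl⟩)
  | zero => simp
  | add x y _ _ hx hy => rw [mul_add]; exact Submodule.add_mem _ hx hy
  | smul c x _ hx => rw [mul_smul_comm]; exact Submodule.smul_mem _ _ hx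

lemma symIdeal_le_spanT {p : MvPolynomial (Fin n) ℂ} (hp : p ∈ symIdeal n) :
    p ∈ Submodule.span ℂ (T n) := by
  induction hp using Submodule.span_induction with
  | mem f hf =>
      obtain ⟨hsym, hcc⟩ := hf
      rw [← sum_homogeneousComponent f]
      refine Submodule.sum_mem _ fun d hd => ?_
      rcases Nat.eq_zero_or_pos d with rfl | hd0
      · have : homogeneousComponent 0 f = 0 := by
          rw [homogeneousComponent_zero, ← constantCoeff_eq, hcc, map_zero]
        simp [this]
      · refine Submodule.subset_span ⟨0, homogeneousComponent d f, d, hd0,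
          homogeneousComponent_isHomogeneous d f, ?_, by simp⟩
        intro σ
        rw [← hc_rename, hsym]
  | zero => exact Submodule.zero_mem _
  | add x y _ _ hx hy => exact Submodule.add_mem _ hx hy
  | smul r x _ hx =>
      have : r • x = r * x := rfl
      rw [this]; exact mul_mem_spanT hx r

lemma mem_symIdeal_iff_spanT {p : MvPolynomial (Fin n) ℂ} :
    p ∈ symIdeal n ↔ p ∈ Submodule.span ℂ (T n) := by
  constructor
  · exact symIdeal_le_spanT
  · intro hp
    have : Submodule.span ℂ (T n) ≤ (symIdeal n).restrictScalars ℂ :=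
      Submodule.span_le.2 T_subset_symIdeal
    exact this hp


/-! ### Part B: the evaluation map onto functions on the orbit of a generic point -/

variable (n : ℕ)

noncomputable def av : Fin n → ℂ := fun j => ((j : ℕ) : ℂ)

lemma av_injective : Function.Injective (av n) := by
  intro i j h
  have : ((i : ℕ) : ℂ) = ((j : ℕ) : ℂ) := h
  exact Fin.ext (Nat.cast_injective this)

/-- Evaluation of polynomials on the `Σₙ`-orbit of the point `av`. -/
noncomputable def E : MvPolynomial (Fin n) ℂ →ₗ[ℂ] (Equiv.Perm (Fin n) → ℂ) where
  toFun p := fun τ => eval (fun i => av n (τ i)) p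
  map_add' p q := by funext τ; simp
  map_smul' c p := by funext τ; simp [smul_eq_C_mul]

lemma E_apply (p : MvPolynomial (Fin n) ℂ) (τ : Equiv.Perm (Fin n)) :
    E n p τ = eval (fun i => av n (τ i)) p := rfl

/-- The right-translation representation of `Σₙ` on functions on `Σₙ`. -/
def rho (σ : Equiv.Perm (Fin n)) :
    (Equiv.Perm (Fin n) → ℂ) →ₗ[ℂ] (Equiv.Perm (Fin n) → ℂ) where
  toFun f := fun τ => f (τ * σ)
  map_add' _ _ := rfl
  map_smul' _ _ := rfl

lemma rho_apply (σ : Equiv.Perm (Fin n)) (f : Equiv.Perm (Fin n) → ℂ) (τ : Equiv.Perm (Fin n)) :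
    rho n σ f τ = f (τ * σ) := rfl

lemma rho_rho (σ σ' : Equiv.Perm (Fin n)) (f : Equiv.Perm (Fin n) → ℂ) :
    rho n σ (rho n σ' f) = rho n (σ * σ') f := by
  funext τ; simp [rho_apply, mul_assoc]

lemma rho_one (f : Equiv.Perm (Fin n) → ℂ) : rho n 1 f = f := by
  funext τ; simp [rho_apply]

lemma E_rename (σ : Equiv.Perm (Fin n)) (p : MvPolynomial (Fin n) ℂ) :
    E n (rename ⇑σ p) = rho n σ (E n p) := by
  funext τ
  rw [E_apply, rho_apply, E_apply, eval_rename]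
  rfl

lemma E_mul (p q : MvPolynomial (Fin n) ℂ) (τ : Equiv.Perm (Fin n)) :
    E n (p * q) τ = E n p τ * E n q τ := by
  simp [E_apply]

lemma E_symm (f : MvPolynomial (Fin n) ℂ)
    (hsym : ∀ σ : Equiv.Perm (Fin n), rename ⇑σ f = f) (τ : Equiv.Perm (Fin n)) :
    E n f τ = eval (av n) f := by
  conv_rhs => rw [← hsym τ]
  rw [E_apply, eval_rename]
  rfl

/-- Filtration of the function space by total degree of the evaluated polynomial. -/
noncomputable def FF (d : ℕ) : Submodule ℂ (Equiv.Perm (Fin n) → ℂ) :=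
  (restrictTotalDegree (Fin n) ℂ d).map (E n)

lemma FF_mono {d d' : ℕ} (h : d ≤ d') : FF n d ≤ FF n d' := by
  apply Submodule.map_mono
  intro p hp
  rw [mem_restrictTotalDegree] at hp ⊢
  exact hp.trans h

lemma mem_FF_of_totalDegree {p : MvPolynomial (Fin n) ℂ} {d : ℕ}
    (h : p.totalDegree ≤ d) : E n p ∈ FF n d :=
  ⟨p, (mem_restrictTotalDegree _ _ _).2 h, rfl⟩

lemma FF_stable (σ : Equiv.Perm (Fin n)) {d : ℕ} {x : Equiv.Perm (Fin n) → ℂ}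
    (hx : x ∈ FF n d) : rho n σ x ∈ FF n d := by
  obtain ⟨p, hp, rfl⟩ := Submodule.mem_map.1 hx
  rw [mem_restrictTotalDegree] at hp
  rw [← E_rename]
  exact mem_FF_of_totalDegree n ((totalDegree_rename_le _ _).trans hp)


/-! ### Surjectivity onto the top filtration step -/

noncomputable def pdel (σ : Equiv.Perm (Fin n)) : MvPolynomial (Fin n) ℂ :=
  ∏ i : Fin n, ∏ j ∈ Finset.univ.erase (σ i), (X i - C (av n j))

lemma pdel_totalDegree (σ : Equiv.Perm (Fin n)) : (pdel n σ).totalDegree ≤ n * n := by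
  refine (totalDegree_finset_prod _ _).trans ?_
  have h1 : ∀ i : Fin n,
      (∏ j ∈ Finset.univ.erase (σ i), (X i - C (av n j))).totalDegree ≤ n := by
    intro i
    refine (totalDegree_finset_prod _ _).trans ?_
    have h2 : ∀ j : Fin n, (X (R := ℂ) i - C (av n j)).totalDegree ≤ 1 := by
      intro j
      rw [sub_eq_add_neg, ← C_neg]
      refine (totalDegree_add _ _).trans ?_
      simp [totalDegree_X, totalDegree_C]
    refine le_trans (Finset.sum_le_sum fun j _ => h2 j) ?_
    simp only [Finset.sum_const, smul_eq_mul, mul_one]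
    exact (Finset.card_erase_of_mem (Finset.mem_univ _)).le.trans
      (by simp [Fintype.card_fin])
  refine le_trans (Finset.sum_le_sum fun i _ => h1 i) ?_
  simp [Fintype.card_fin, mul_comm]

lemma E_pdel (σ τ : Equiv.Perm (Fin n)) :
    E n (pdel n σ) τ = ∏ i : Fin n, ∏ j ∈ Finset.univ.erase (σ i), (av n (τ i) - av n j) := by
  rw [E_apply, pdel]
  rw [map_prod]
  refine Finset.prod_congr rfl fun i _ => ?_
  rw [map_prod]
  refine Finset.prod_congr rfl fun j _ => ?_
  simp

lemma E_pdel_ne {σ τ : Equiv.Perm (Fin n)} (h : τ ≠ σ) : E n (pdel n σ) τ = 0 := by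
  rw [E_pdel]
  obtain ⟨i, hi⟩ : ∃ i, τ i ≠ σ i := by
    by_contra hc
    push_neg at hc
    exact h (Equiv.ext hc)
  refine Finset.prod_eq_zero (Finset.mem_univ i) ?_
  refine Finset.prod_eq_zero (Finset.mem_erase.2 ⟨hi, Finset.mem_univ _⟩) ?_
  ring

lemma E_pdel_self (σ : Equiv.Perm (Fin n)) : E n (pdel n σ) σ ≠ 0 := by
  rw [E_pdel]
  refine Finset.prod_ne_zero_iff.2 fun i _ => Finset.prod_ne_zero_iff.2 fun j hj => ?_
  have : j ≠ σ i := (Finset.mem_erase.1 hj).1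
  intro hz
  exact this (av_injective n (sub_eq_zero.1 hz)).symm

/-- The indicator function of `σ`. -/
def ind (σ : Equiv.Perm (Fin n)) : Equiv.Perm (Fin n) → ℂ :=
  fun τ => if τ = σ then 1 else 0

lemma ind_mem_FF (σ : Equiv.Perm (Fin n)) : ind n σ ∈ FF n (n * n) := by
  have key : ind n σ = (E n (pdel n σ) σ)⁻¹ • E n (pdel n σ) := by
    funext τ
    rcases eq_or_ne τ σ with rfl | h
    · simp [ind, inv_mul_cancel₀ (E_pdel_self n τ)]
    · simp [ind, h, E_pdel_ne n h]
  rw [key]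
  exact Submodule.smul_mem _ _ (mem_FF_of_totalDegree n (pdel_totalDegree n σ))

lemma FF_top : FF n (n * n) = ⊤ := by
  rw [Submodule.eq_top_iff']
  intro f
  have : f = ∑ σ : Equiv.Perm (Fin n), f σ • ind n σ := by
    funext τ
    simp only [Finset.sum_apply, Pi.smul_apply, ind, smul_eq_mul, mul_ite, mul_one, mul_zero]
    simp
  rw [this]
  exact Submodule.sum_mem _ fun σ _ => Submodule.smul_mem _ _ (ind_mem_FF n σ)


/-! ### Equivariant projections via averaging (Maschke) -/

noncomputable def proj0 (U : Submodule ℂ (Equiv.Perm (Fin n) → ℂ)) :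
    (Equiv.Perm (Fin n) → ℂ) →ₗ[ℂ] (Equiv.Perm (Fin n) → ℂ) :=
  U.subtype ∘ₗ
    Submodule.linearProjOfIsCompl U U.exists_isCompl.choose U.exists_isCompl.choose_spec

lemma proj0_mem (U : Submodule ℂ (Equiv.Perm (Fin n) → ℂ)) (x : Equiv.Perm (Fin n) → ℂ) :
    proj0 n U x ∈ U := (Submodule.linearProjOfIsCompl U _ _ x).2

lemma proj0_fix (U : Submodule ℂ (Equiv.Perm (Fin n) → ℂ)) {x : Equiv.Perm (Fin n) → ℂ}
    (hx : x ∈ U) : proj0 n U x = x := by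
  have : proj0 n U x = ↑(Submodule.projectionOnto U _ U.exists_isCompl.choose_spec
      (⟨x, hx⟩ : U) : U) := rfl
  rw [this, Submodule.projectionOnto_apply_left]

noncomputable def pr : ℕ → ((Equiv.Perm (Fin n) → ℂ) →ₗ[ℂ] (Equiv.Perm (Fin n) → ℂ))
  | 0 => 0
  | (d+1) => (Fintype.card (Equiv.Perm (Fin n)) : ℂ)⁻¹ •
      ∑ σ : Equiv.Perm (Fin n), (rho n σ) ∘ₗ (proj0 n (FF n d)) ∘ₗ (rho n σ⁻¹)

lemma pr_succ_apply (d : ℕ) (x : Equiv.Perm (Fin n) → ℂ) :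
    pr n (d+1) x = (Fintype.card (Equiv.Perm (Fin n)) : ℂ)⁻¹ •
      ∑ σ : Equiv.Perm (Fin n), rho n σ (proj0 n (FF n d) (rho n σ⁻¹ x)) := by
  simp [pr, LinearMap.sum_apply]

lemma pr_succ_mem (d : ℕ) (x : Equiv.Perm (Fin n) → ℂ) : pr n (d+1) x ∈ FF n d := by
  rw [pr_succ_apply]
  refine Submodule.smul_mem _ _ (Submodule.sum_mem _ fun σ _ => ?_)
  exact FF_stable n σ (proj0_mem n _ _)

lemma card_perm_ne_zero : ((Fintype.card (Equiv.Perm (Fin n)) : ℂ)) ≠ 0 := by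
  exact_mod_cast Nat.cast_ne_zero.2 Fintype.card_ne_zero

lemma pr_succ_fix (d : ℕ) {x : Equiv.Perm (Fin n) → ℂ} (hx : x ∈ FF n d) :
    pr n (d+1) x = x := by
  rw [pr_succ_apply]
  have hterm : ∀ σ : Equiv.Perm (Fin n),
      rho n σ (proj0 n (FF n d) (rho n σ⁻¹ x)) = x := by
    intro σ
    rw [proj0_fix n _ (FF_stable n σ⁻¹ hx), rho_rho, mul_inv_cancel, rho_one]
  rw [Finset.sum_congr rfl fun σ _ => hterm σ]
  rw [Finset.sum_const, Finset.card_univ, ← Nat.cast_smul_eq_nsmul ℂ, smul_smul,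
    inv_mul_cancel₀ (card_perm_ne_zero n), one_smul]

lemma pr_rho (d : ℕ) (σ : Equiv.Perm (Fin n)) (x : Equiv.Perm (Fin n) → ℂ) :
    pr n d (rho n σ x) = rho n σ (pr n d x) := by
  cases d with
  | zero => simp [pr]
  | succ d =>
      rw [pr_succ_apply, pr_succ_apply, map_smul, map_sum]
      congr 1
      refine Fintype.sum_equiv (Equiv.mulLeft σ⁻¹) _ _ fun g => ?_
      have hg : Equiv.mulLeft σ⁻¹ g = σ⁻¹ * g := rfl
      rw [hg, rho_rho n g⁻¹ σ x, rho_rho n σ (σ⁻¹ * g),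
        show σ * (σ⁻¹ * g) = g from by rw [← mul_assoc, mul_inv_cancel, one_mul],
        show (σ⁻¹ * g)⁻¹ = g⁻¹ * σ from by rw [mul_inv_rev, inv_inv]]


/-! ### The equivariant linear map `Psi` killing the ideal -/

noncomputable def Psi : MvPolynomial (Fin n) ℂ →ₗ[ℂ] (Equiv.Perm (Fin n) → ℂ) :=
  ∑ d ∈ Finset.range (n*n+1),
    (LinearMap.id - pr n d) ∘ₗ (E n) ∘ₗ (homogeneousComponent d)

lemma Psi_apply (p : MvPolynomial (Fin n) ℂ) :
    Psi n p = ∑ d ∈ Finset.range (n*n+1),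
      (E n (homogeneousComponent d p) - pr n d (E n (homogeneousComponent d p))) := by
  simp [Psi, LinearMap.sum_apply, LinearMap.sub_apply]

lemma sum_hc {p : MvPolynomial (Fin n) ℂ} {N : ℕ} (h : p.totalDegree ≤ N) :
    ∑ d ∈ Finset.range (N+1), homogeneousComponent d p = p := by
  have he : ∑ d ∈ Finset.range (N+1), homogeneousComponent d p
      = ∑ d ∈ Finset.range (p.totalDegree+1), homogeneousComponent d p := by
    refine (Finset.sum_subset ?_ ?_).symm
    · intro x hx
      simp only [Finset.mem_range] at *
      omega
    · intro x hx hnx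
      simp only [Finset.mem_range] at *
      exact homogeneousComponent_eq_zero x p (by omega)
  rw [he, sum_homogeneousComponent]

lemma hc_zero_of_mem {p : MvPolynomial (Fin n) ℂ} (hp : p ∈ symIdeal n) :
    homogeneousComponent 0 p = 0 := by
  rw [homogeneousComponent_zero, ← constantCoeff_eq, constantCoeff_mem_symIdeal hp, map_zero]

lemma keyB {p : MvPolynomial (Fin n) ℂ} (hp : p ∈ symIdeal n) {d : ℕ} (hd : 1 ≤ d) :
    E n (homogeneousComponent d p) ∈ FF n (d-1) := by
  classical
  obtain ⟨c, hsup, rfl⟩ := Submodule.mem_span_set.1 (symIdeal_le_spanT hp)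
  rw [map_finsuppSum, map_finsuppSum]
  refine Submodule.sum_mem _ fun q hq => ?_
  have hqT : q ∈ T n := hsup hq
  obtain ⟨α, f, j, hj, hhom, hsym, rfl⟩ := hqT
  have hmono : (monomial α (1:ℂ)).IsHomogeneous α.degree := isHomogeneous_monomial 1 rfl
  have hqhom : (monomial α (1:ℂ) * f).IsHomogeneous (α.degree + j) := hmono.mul hhom
  simp only [map_smul]
  refine Submodule.smul_mem _ _ ?_
  rw [homogeneousComponent_of_mem ((mem_homogeneousSubmodule _ _).2 hqhom)]
  split_ifs with hdeg
  · have hEq : E n (monomial α (1:ℂ) * f) = eval (av n) f • E n (monomial α 1) := by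
      funext τ
      rw [Pi.smul_apply, E_mul, E_symm n f hsym, smul_eq_mul, mul_comm]
    rw [hEq]
    refine Submodule.smul_mem _ _ (mem_FF_of_totalDegree n ?_)
    refine (totalDegree_monomial_le _ _).trans ?_
    have h1 : α.sum (fun _ e => e) = α.degree := rfl
    have h2 : (α.sum fun _ => id) = α.degree := rfl
    omega
  · simp

lemma Psi_ker {p : MvPolynomial (Fin n) ℂ} (hp : p ∈ symIdeal n) : Psi n p = 0 := by
  rw [Psi_apply]
  refine Finset.sum_eq_zero fun d _ => ?_
  cases d with
  | zero => simp [hc_zero_of_mem n hp]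
  | succ e =>
      have hmem := keyB n hp (d := e+1) (by omega)
      simp only [Nat.add_sub_cancel] at hmem
      rw [pr_succ_fix n e hmem, sub_self]

lemma Psi_equivariant (σ : Equiv.Perm (Fin n)) (p : MvPolynomial (Fin n) ℂ) :
    Psi n (rename ⇑σ p) = rho n σ (Psi n p) := by
  rw [Psi_apply, Psi_apply, map_sum]
  refine Finset.sum_congr rfl fun d _ => ?_
  rw [hc_rename, E_rename, map_sub, pr_rho]

lemma FF_le_range : ∀ d, d ≤ n*n → FF n d ≤ LinearMap.range (Psi n) := by
  intro d
  induction d using Nat.strong_induction_on with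
  | _ d IH =>
    intro hd x hx
    obtain ⟨p, hp, rfl⟩ := Submodule.mem_map.1 hx
    rw [mem_restrictTotalDegree] at hp
    have hsplit : Psi n p = E n p -
        ∑ d' ∈ Finset.range (n*n+1), pr n d' (E n (homogeneousComponent d' p)) := by
      rw [Psi_apply, Finset.sum_sub_distrib, ← map_sum, sum_hc n (hp.trans hd)]
    cases d with
    | zero =>
        have hy : ∑ d' ∈ Finset.range (n*n+1),
            pr n d' (E n (homogeneousComponent d' p)) = 0 := by
          refine Finset.sum_eq_zero fun d' _ => ?_
          cases d' with
          | zero => simp [pr]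
          | succ e =>
              rw [homogeneousComponent_eq_zero _ p (by omega), map_zero, map_zero]
        exact ⟨p, by rw [hsplit, hy, sub_zero]⟩
    | succ e =>
        have hy : ∑ d' ∈ Finset.range (n*n+1),
            pr n d' (E n (homogeneousComponent d' p)) ∈ FF n e := by
          refine Submodule.sum_mem _ fun d' hd' => ?_
          cases d' with
          | zero =>
              simp only [pr, LinearMap.zero_apply]
              exact Submodule.zero_mem _
          | succ e' =>
              rcases le_or_gt (e'+1) (e+1) with hle | hlt
              · exact FF_mono n (by omega) (pr_succ_mem n e' _)
              · rw [homogeneousComponent_eq_zero _ p (by omega), map_zero, map_zero]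
                exact Submodule.zero_mem _
        have hyr : ∑ d' ∈ Finset.range (n*n+1),
            pr n d' (E n (homogeneousComponent d' p)) ∈ LinearMap.range (Psi n) :=
          IH e (by omega) (by omega) hy
        have : E n p = Psi n p +
            ∑ d' ∈ Finset.range (n*n+1), pr n d' (E n (homogeneousComponent d' p)) := by
          rw [hsplit]; ring
        rw [this]
        exact Submodule.add_mem _ ⟨p, rfl⟩ hyr

lemma Psi_surjective : Function.Surjective (Psi n) := by
  rw [← LinearMap.range_eq_top]
  rw [eq_top_iff, ← FF_top n]
  exact FF_le_range n (n*n) le_rfl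


/-! ### Part A: spanning by sub-staircase monomials -/

lemma degree_add' (a b : Fin n →₀ ℕ) : (a + b).degree = a.degree + b.degree := by
  have h : ∀ γ : Fin n →₀ ℕ, γ.degree = γ.sum fun _ m => m := fun γ => rfl
  rw [h, h, h, Finsupp.sum_add_index' (fun _ => rfl) (fun _ _ _ => rfl)]

lemma degree_single' (i : Fin n) (k : ℕ) : (Finsupp.single i k).degree = k := by
  have h : ∀ γ : Fin n →₀ ℕ, γ.degree = γ.sum fun _ m => m := fun γ => rfl
  rw [h, Finsupp.sum_single_index rfl]

/-- Exponent vectors of degree `m` supported on variables of index `≥ i`. -/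
noncomputable def AD (i m : ℕ) : Finset (Fin n →₀ ℕ) :=
  Finset.finsuppAntidiag (Finset.univ.filter fun j : Fin n => i ≤ (j:ℕ)) m

lemma mem_AD {i m : ℕ} {β : Fin n →₀ ℕ} :
    β ∈ AD n i m ↔ β.degree = m ∧ ∀ j : Fin n, (j:ℕ) < i → β j = 0 := by
  classical
  rw [AD, Finset.mem_finsuppAntidiag]
  constructor
  · rintro ⟨hsum, hsub⟩
    refine ⟨?_, ?_⟩
    · rw [← hsum, Finsupp.degree]
      exact Finset.sum_subset hsub fun x _ hx => Finsupp.notMem_support_iff.1 hx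
    · intro j hj
      by_contra h0
      have hmem := hsub (Finsupp.mem_support_iff.2 h0)
      rw [Finset.mem_filter] at hmem
      omega
  · rintro ⟨hdeg, hzero⟩
    have hsub : β.support ⊆ Finset.univ.filter fun j : Fin n => i ≤ (j:ℕ) := by
      intro j hj
      rw [Finset.mem_filter]
      refine ⟨Finset.mem_univ _, ?_⟩
      by_contra hc
      exact Finsupp.mem_support_iff.1 hj (hzero j (by omega))
    refine ⟨?_, hsub⟩
    rw [← hdeg, Finsupp.degree]
    exact (Finset.sum_subset hsub fun x _ hx => Finsupp.notMem_support_iff.1 hx).symm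

/-- The complete homogeneous polynomial of degree `m` in the variables `xᵢ, …, xₙ₋₁`. -/
noncomputable def Hs (i m : ℕ) : MvPolynomial (Fin n) ℂ :=
  ∑ β ∈ AD n i m, monomial β (1:ℂ)

lemma Hs_symm (σ : Equiv.Perm (Fin n)) (m : ℕ) : rename ⇑σ (Hs n 0 m) = Hs n 0 m := by
  classical
  rw [Hs, map_sum]
  simp_rw [rename_monomial]
  refine Finset.sum_nbij' (i := fun β => β.mapDomain ⇑σ) (j := fun β => β.mapDomain ⇑σ⁻¹)
    ?_ ?_ ?_ ?_ ?_
  · intro β hβ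
    rw [mem_AD] at hβ ⊢
    exact ⟨by rw [degree_mapDomain, hβ.1], fun j hj => by omega⟩
  · intro β hβ
    rw [mem_AD] at hβ ⊢
    exact ⟨by rw [degree_mapDomain, hβ.1], fun j hj => by omega⟩
  · intro β _
    show Finsupp.mapDomain ⇑σ⁻¹ (Finsupp.mapDomain ⇑σ β) = β
    rw [← Finsupp.mapDomain_comp]
    have h2 : (⇑σ⁻¹ ∘ ⇑σ) = id := by funext x; simp
    rw [h2, Finsupp.mapDomain_id]
  · intro β _
    show Finsupp.mapDomain ⇑σ (Finsupp.mapDomain ⇑σ⁻¹ β) = β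
    rw [← Finsupp.mapDomain_comp]
    have h2 : (⇑σ ∘ ⇑σ⁻¹) = id := by funext x; simp
    rw [h2, Finsupp.mapDomain_id]
  · intro β _
    rfl

lemma Hs_cc {m : ℕ} (hm : 1 ≤ m) : constantCoeff (Hs n 0 m) = 0 := by
  rw [Hs, map_sum]
  refine Finset.sum_eq_zero fun β hβ => ?_
  rw [mem_AD] at hβ
  rw [constantCoeff_monomial]
  have : β ≠ 0 := by
    intro h0
    rw [h0, map_zero] at hβ
    omega
  simp [this]

lemma Hs_zero_of_ge {i m : ℕ} (hi : n ≤ i) (hm : 1 ≤ m) : Hs n i m = 0 := by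
  rw [Hs]
  have : AD n i m = ∅ := by
    refine Finset.eq_empty_of_forall_notMem fun β hβ => ?_
    rw [mem_AD] at hβ
    have hz : β = 0 := by
      ext j
      exact hβ.2 j (by omega)
    rw [hz, map_zero] at hβ
    omega
  rw [this, Finset.sum_empty]

lemma Hs_rec {i : ℕ} (h : i < n) (m : ℕ) :
    Hs n i (m+1) = Hs n (i+1) (m+1) + X ⟨i,h⟩ * Hs n i m := by
  classical
  rw [Hs, ← Finset.sum_filter_add_sum_filter_not (AD n i (m+1)) (fun β => β ⟨i,h⟩ = 0)]
  congr 1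
  · rw [Hs]
    refine Finset.sum_congr ?_ fun _ _ => rfl
    ext β
    rw [Finset.mem_filter, mem_AD, mem_AD]
    constructor
    · rintro ⟨⟨hdeg, hz⟩, hzi⟩
      refine ⟨hdeg, fun j hj => ?_⟩
      rcases lt_or_ge (j:ℕ) i with hlt | hge
      · exact hz j hlt
      · have : (j:ℕ) = i := by omega
        have : j = (⟨i, h⟩ : Fin n) := Fin.ext this
        rw [this]; exact hzi
    · rintro ⟨hdeg, hz⟩
      exact ⟨⟨hdeg, fun j hj => hz j (by omega)⟩, hz ⟨i,h⟩ (by simp)⟩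
  · rw [Hs, Finset.mul_sum]
    refine Finset.sum_nbij' (i := fun β => β - Finsupp.single ⟨i,h⟩ 1)
      (j := fun γ => γ + Finsupp.single ⟨i,h⟩ 1) ?_ ?_ ?_ ?_ ?_
    · intro β hβ
      rw [Finset.mem_filter, mem_AD] at hβ
      obtain ⟨⟨hdeg, hz⟩, hnz⟩ := hβ
      beta_reduce
      have hle : Finsupp.single (⟨i,h⟩ : Fin n) 1 ≤ β :=
        Finsupp.single_le_iff.2 (by omega)
      have hcan : β - Finsupp.single ⟨i,h⟩ 1 + Finsupp.single ⟨i,h⟩ 1 = β :=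
        tsub_add_cancel_of_le hle
      rw [mem_AD]
      constructor
      · have := degree_add' n (β - Finsupp.single ⟨i,h⟩ 1) (Finsupp.single ⟨i,h⟩ 1)
        rw [hcan, degree_single', hdeg] at this
        omega
      · intro j hj
        have hji : ¬((⟨i,h⟩:Fin n) = j) := by
          intro he; rw [← he] at hj; simp at hj
        rw [Finsupp.tsub_apply, Finsupp.single_apply, if_neg hji]
        have := hz j hj
        omega
    · intro γ hγ
      rw [mem_AD] at hγ
      beta_reduce
      rw [Finset.mem_filter, mem_AD]
      refine ⟨⟨?_, fun j hj => ?_⟩, ?_⟩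
      · rw [degree_add' , degree_single', hγ.1]
      · rw [Finsupp.add_apply, Finsupp.single_apply]
        have hji : ¬((⟨i,h⟩ : Fin n) = j) := by
          intro he; rw [← he] at hj; simp at hj
        rw [if_neg hji]
        exact hγ.2 j hj
      · rw [Finsupp.add_apply, Finsupp.single_apply, if_pos rfl]
        omega
    · intro β hβ
      rw [Finset.mem_filter, mem_AD] at hβ
      have hle : Finsupp.single (⟨i,h⟩ : Fin n) 1 ≤ β :=
        Finsupp.single_le_iff.2 (by omega)
      beta_reduce
      exact tsub_add_cancel_of_le hle
    · intro γ _
      beta_reduce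
      simp
    · intro β hβ
      rw [Finset.mem_filter, mem_AD] at hβ
      have hle : Finsupp.single (⟨i,h⟩ : Fin n) 1 ≤ β :=
        Finsupp.single_le_iff.2 (by omega)
      beta_reduce
      rw [X, monomial_mul, one_mul,
        add_comm (Finsupp.single (⟨i,h⟩:Fin n) 1) (β - Finsupp.single (⟨i,h⟩:Fin n) 1),
        tsub_add_cancel_of_le hle]
    
lemma Hs_mem : ∀ i m : ℕ, i + 1 ≤ m → Hs n i m ∈ symIdeal n := by
  intro i
  induction i with
  | zero =>
      intro m hm
      exact Ideal.subset_span ⟨fun σ => Hs_symm n σ m, Hs_cc n hm⟩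
  | succ i IH =>
      intro m hm
      by_cases h : i < n
      · obtain ⟨m', rfl⟩ : ∃ m', m = m' + 1 := ⟨m - 1, by omega⟩
        have hrec := Hs_rec n h m'
        have h1 : Hs n (i+1) (m'+1) = Hs n i (m'+1) - X ⟨i,h⟩ * Hs n i m' := by
          rw [hrec]; ring
        rw [h1]
        exact Ideal.sub_mem _ (IH _ (by omega)) (Ideal.mul_mem_left _ _ (IH _ (by omega)))
      · rw [Hs_zero_of_ge n (by omega) (by omega)]
        exact Ideal.zero_mem _


/-! ### Spanning by sub-staircase monomials -/

noncomputable def stairFinset : Finset (Fin n →₀ ℕ) :=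
  (Finset.univ : Finset (∀ j : Fin n, Fin ((j:ℕ)+1))).image
    (fun f => Finsupp.equivFunOnFinite.symm fun j => (f j : ℕ))

lemma stairFinset_card_le : (stairFinset n).card ≤ n.factorial := by
  refine Finset.card_image_le.trans ?_
  rw [Finset.card_univ, Fintype.card_pi]
  simp only [Fintype.card_fin]
  rw [Fin.prod_univ_eq_prod_range (fun j => j + 1) n]
  exact le_of_eq (Finset.prod_range_add_one_eq_factorial n)

lemma mem_stairFinset {α : Fin n →₀ ℕ} (hα : ∀ j : Fin n, α j ≤ (j:ℕ)) :
    α ∈ stairFinset n := by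
  refine Finset.mem_image.2 ⟨fun j => ⟨α j, by have := hα j; omega⟩, Finset.mem_univ _, ?_⟩
  ext j
  simp [Finsupp.equivFunOnFinite]

open Classical in
/-- The image of the monomial basis elements below the staircase. -/
noncomputable def stairSet : Finset (MvPolynomial (Fin n) ℂ ⧸ symIdeal n) :=
  (stairFinset n).image fun α => Ideal.Quotient.mk (symIdeal n) (monomial α (1:ℂ))

open Classical in
lemma mem_stairSet_of {α : Fin n →₀ ℕ} (hα : α ∈ stairFinset n) :
    Ideal.Quotient.mk (symIdeal n) (monomial α (1:ℂ)) ∈ stairSet n := by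
  rw [stairSet]
  exact Finset.mem_image.2 ⟨α, hα, rfl⟩

open Classical in
lemma stairSet_card_le : (stairSet n).card ≤ n.factorial := by
  rw [stairSet]
  exact Finset.card_image_le.trans (stairFinset_card_le n)

lemma mk_monomial_mem_span (α : Fin n →₀ ℕ) :
    Ideal.Quotient.mk (symIdeal n) (monomial α 1) ∈
      Submodule.span ℂ (stairSet n : Set (MvPolynomial (Fin n) ℂ ⧸ symIdeal n)) := by
  classical
  suffices h : ∀ a : Lex (Fin n →₀ ℕ), Ideal.Quotient.mk (symIdeal n)
      (monomial (ofLex a) 1) ∈ Submodule.span ℂ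
        (stairSet n : Set (MvPolynomial (Fin n) ℂ ⧸ symIdeal n)) from h (toLex α)
  intro a
  induction a using WellFoundedLT.induction with
  | ind a IH =>
  set α : Fin n →₀ ℕ := ofLex a with hαdef
  by_cases hst : ∀ j : Fin n, α j ≤ (j:ℕ)
  · exact Submodule.subset_span (mem_stairSet_of n (mem_stairFinset n hst))
  · push_neg at hst
    obtain ⟨i, hi⟩ := hst
    set k : ℕ := (i:ℕ) + 1 with hk
    have hki : k ≤ α i := by omega
    set α' : Fin n →₀ ℕ := α - Finsupp.single i k with hα'
    have hle : Finsupp.single i k ≤ α := Finsupp.single_le_iff.2 hki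
    have hcan : α' + Finsupp.single i k = α := tsub_add_cancel_of_le hle
    have hsing_mem : Finsupp.single i k ∈ AD n (i:ℕ) k := by
      rw [mem_AD]
      refine ⟨degree_single' n i k, fun j hj => ?_⟩
      rw [Finsupp.single_apply, if_neg (fun he => by rw [he] at hj; omega)]
    have hprod : monomial α' (1:ℂ) * Hs n (i:ℕ) k = ∑ β ∈ AD n (i:ℕ) k,
        monomial (α' + β) (1:ℂ) := by
      rw [Hs, Finset.mul_sum]
      refine Finset.sum_congr rfl fun β _ => ?_
      rw [monomial_mul, mul_one]
    have hsplit : monomial α (1:ℂ) = monomial α' (1:ℂ) * Hs n (i:ℕ) k -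
        ∑ β ∈ (AD n (i:ℕ) k).erase (Finsupp.single i k), monomial (α' + β) (1:ℂ) := by
      rw [hprod, ← Finset.add_sum_erase _ _ hsing_mem, hcan]
      ring
    have hHmem : Hs n (i:ℕ) k ∈ symIdeal n := Hs_mem n (i:ℕ) k (by omega)
    have hmk0 : Ideal.Quotient.mk (symIdeal n) (monomial α' (1:ℂ) * Hs n (i:ℕ) k) = 0 :=
      Ideal.Quotient.eq_zero_iff_mem.2 (Ideal.mul_mem_left _ _ hHmem)
    rw [hsplit, map_sub, hmk0, zero_sub, map_sum]
    refine Submodule.neg_mem _ (Submodule.sum_mem _ fun β hβ => ?_)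
    have hβAD := (Finset.mem_erase.1 hβ).2
    have hβne := (Finset.mem_erase.1 hβ).1
    rw [mem_AD] at hβAD
    -- β i < k
    have hβik : β i < k := by
      rcases lt_or_ge (β i) k with h' | h'
      · exact h'
      · exfalso
        have hle2 : β i ≤ β.degree := Finsupp.le_degree i β
        have hβik : β i = k := by omega
        apply hβne
        ext j
        rcases eq_or_ne j i with rfl | hne
        · rw [Finsupp.single_apply, if_pos rfl]; exact hβik
        · rw [Finsupp.single_apply, if_neg (fun he => hne he.symm)]
          by_contra h0
          have hij : i ∈ β.support := Finsupp.mem_support_iff.2 (by omega)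
          have hjj : j ∈ β.support := Finsupp.mem_support_iff.2 h0
          have hsub : ({i, j} : Finset (Fin n)) ⊆ β.support := by
            intro x hx
            rcases Finset.mem_insert.1 hx with rfl | hx
            · exact hij
            · rw [Finset.mem_singleton.1 hx]; exact hjj
          have : β i + β j ≤ β.degree := by
            rw [Finsupp.degree]
            rw [← Finset.sum_pair (fun he => hne he.symm)]
            exact Finset.sum_le_sum_of_subset hsub
          omega
    -- lexicographic decrease
    have hlt : toLex (α' + β) < a := by
      show Finsupp.Lex (· < ·) (· < ·) (α' + β) α
      rw [Finsupp.lex_def]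
      refine ⟨i, fun d hd => ?_, ?_⟩
      · have hdi : d ≠ i := fun he => by rw [he] at hd; exact lt_irrefl _ hd
        have hdval : (d:ℕ) < (i:ℕ) := hd
        rw [Finsupp.add_apply, hα', Finsupp.tsub_apply, Finsupp.single_apply,
          if_neg (fun he => hdi he.symm), hβAD.2 d (by omega)]
        omega
      · rw [Finsupp.add_apply, hα', Finsupp.tsub_apply, Finsupp.single_apply, if_pos rfl]
        omega
    have := IH (toLex (α' + β)) hlt
    simpa using this

lemma span_stair_top :
    Submodule.span ℂ (stairSet n : Set (MvPolynomial (Fin n) ℂ ⧸ symIdeal n)) = ⊤ := by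
  rw [Submodule.eq_top_iff']
  intro v
  obtain ⟨p, rfl⟩ := Ideal.Quotient.mk_surjective v
  rw [MvPolynomial.as_sum p, map_sum]
  refine Submodule.sum_mem _ fun α hα => ?_
  have h1 : monomial α (coeff α p) = C (coeff α p) * monomial α (1:ℂ) := by
    rw [C_mul_monomial, mul_one]
  rw [h1, map_mul]
  have h2 : (Ideal.Quotient.mk (symIdeal n)) (C (coeff α p)) *
      (Ideal.Quotient.mk (symIdeal n)) (monomial α (1:ℂ)) =
      (coeff α p) • (Ideal.Quotient.mk (symIdeal n)) (monomial α (1:ℂ)) := by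
    rw [← Ideal.Quotient.mkₐ_eq_mk ℂ, ← map_smul]
    rw [smul_eq_C_mul]
    rfl
  rw [h2]
  exact Submodule.smul_mem _ _ (mk_monomial_mem_span n α)

lemma findim_V : FiniteDimensional ℂ (MvPolynomial (Fin n) ℂ ⧸ symIdeal n) := by
  have h : FiniteDimensional ℂ
      (Submodule.span ℂ (stairSet n : Set (MvPolynomial (Fin n) ℂ ⧸ symIdeal n))) :=
    FiniteDimensional.span_finset ℂ _
  rw [span_stair_top] at h
  exact Module.Finite.equiv (Submodule.topEquiv)

lemma finrankV_le :
    Module.finrank ℂ (MvPolynomial (Fin n) ℂ ⧸ symIdeal n) ≤ n.factorial := by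
  have h1 : (stairSet n : Set (MvPolynomial (Fin n) ℂ ⧸ symIdeal n)).finrank ℂ
      ≤ (stairSet n).card := finrank_span_finset_le_card (stairSet n)
  rw [Set.finrank, span_stair_top] at h1
  rw [← finrank_top ℂ (MvPolynomial (Fin n) ℂ ⧸ symIdeal n)]
  exact h1.trans (stairSet_card_le n)


/-! ### Assembly -/

noncomputable def PsiBar :
    (MvPolynomial (Fin n) ℂ ⧸ symIdeal n) →ₗ[ℂ] (Equiv.Perm (Fin n) → ℂ) :=
  (Submodule.liftQ ((symIdeal n).restrictScalars ℂ) (Psi n)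
      (fun p hp => Psi_ker n hp)) ∘ₗ
    (Submodule.Quotient.restrictScalarsEquiv ℂ
      ((symIdeal n) : Submodule (MvPolynomial (Fin n) ℂ) (MvPolynomial (Fin n) ℂ))).symm.toLinearMap

lemma PsiBar_mk (p : MvPolynomial (Fin n) ℂ) :
    PsiBar n (Ideal.Quotient.mk (symIdeal n) p) = Psi n p := by
  have h1 : (Ideal.Quotient.mk (symIdeal n)) p = Submodule.Quotient.mk p := rfl
  rw [PsiBar, LinearMap.comp_apply, LinearEquiv.coe_toLinearMap, h1,
    Submodule.Quotient.restrictScalarsEquiv_symm_mk]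
  rfl

lemma PsiBar_surjective : Function.Surjective (PsiBar n) := by
  intro m
  obtain ⟨p, rfl⟩ := Psi_surjective n m
  exact ⟨Ideal.Quotient.mk (symIdeal n) p, PsiBar_mk n p⟩

lemma finrank_M : Module.finrank ℂ (Equiv.Perm (Fin n) → ℂ) = n.factorial := by
  rw [Module.finrank_pi, Fintype.card_perm, Fintype.card_fin]

lemma finrankV_ge :
    n.factorial ≤ Module.finrank ℂ (MvPolynomial (Fin n) ℂ ⧸ symIdeal n) := by
  haveI := findim_V n
  rw [← finrank_M n]
  have h1 : LinearMap.range (PsiBar n) = ⊤ :=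
    LinearMap.range_eq_top.2 (PsiBar_surjective n)
  calc Module.finrank ℂ (Equiv.Perm (Fin n) → ℂ)
      = Module.finrank ℂ (⊤ : Submodule ℂ (Equiv.Perm (Fin n) → ℂ)) := (finrank_top _ _).symm
    _ = Module.finrank ℂ (LinearMap.range (PsiBar n)) := by rw [h1]
    _ ≤ Module.finrank ℂ (MvPolynomial (Fin n) ℂ ⧸ symIdeal n) := (PsiBar n).finrank_range_le

lemma finrankV :
    Module.finrank ℂ (MvPolynomial (Fin n) ℂ ⧸ symIdeal n) = n.factorial :=
  le_antisymm (finrankV_le n) (finrankV_ge n)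

lemma PsiBar_bijective : Function.Bijective (PsiBar n) := by
  haveI := findim_V n
  have h : Module.finrank ℂ (MvPolynomial (Fin n) ℂ ⧸ symIdeal n)
      = Module.finrank ℂ (Equiv.Perm (Fin n) → ℂ) := by
    rw [finrankV n, finrank_M n]
  exact ⟨(LinearMap.injective_iff_surjective_of_finrank_eq_finrank h).2
    (PsiBar_surjective n), PsiBar_surjective n⟩

noncomputable def PsiEquiv :
    (MvPolynomial (Fin n) ℂ ⧸ symIdeal n) ≃ₗ[ℂ] (Equiv.Perm (Fin n) → ℂ) :=
  LinearEquiv.ofBijective (PsiBar n) (PsiBar_bijective n)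

lemma PsiEquiv_mk (p : MvPolynomial (Fin n) ℂ) :
    PsiEquiv n (Ideal.Quotient.mk (symIdeal n) p) = Psi n p := PsiBar_mk n p

noncomputable def invMap :
    (Equiv.Perm (Fin n) → ℂ) ≃ₗ[ℂ] (Equiv.Perm (Fin n) → ℂ) where
  toFun f := fun g => f g⁻¹
  invFun f := fun g => f g⁻¹
  map_add' _ _ := rfl
  map_smul' _ _ := rfl
  left_inv f := by funext g; simp
  right_inv f := by funext g; simp

noncomputable def iota :
    (Equiv.Perm (Fin n) → ℂ) ≃ₗ[ℂ] MonoidAlgebra ℂ (Equiv.Perm (Fin n)) :=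
  (invMap n).trans ((Finsupp.linearEquivFunOnFinite ℂ ℂ (Equiv.Perm (Fin n))).symm.trans
    (MonoidAlgebra.coeffLinearEquiv ℂ).symm)

lemma iota_apply (f : Equiv.Perm (Fin n) → ℂ) (g : Equiv.Perm (Fin n)) :
    (iota n f).coeff g = f g⁻¹ := rfl

lemma iota_rho (σ : Equiv.Perm (Fin n)) (f : Equiv.Perm (Fin n) → ℂ) :
    iota n (rho n σ f) = MonoidAlgebra.single σ 1 * iota n f := by
  refine MonoidAlgebra.ext (Finsupp.ext fun g => ?_)
  rw [MonoidAlgebra.coeff_single_mul_apply, one_mul, iota_apply, iota_apply, rho_apply,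
    mul_inv_rev, inv_inv]

end ChevAux


/-- Chevalley's theorem: the coinvariant algebra `ℂ[x₁,…,xₙ] / (ℂ[x₁,…,xₙ]₊^{Σₙ})`
carries the regular representation of `Σₙ` (there is a linear isomorphism with the group
algebra intertwining the permutation action with left translation); in particular its
dimension is `n!`. -/
theorem stmt_14 (n : ℕ) :
    (∃ e : (MvPolynomial (Fin n) ℂ ⧸ symIdeal n) ≃ₗ[ℂ]
        MonoidAlgebra ℂ (Equiv.Perm (Fin n)),
      ∀ (σ : Equiv.Perm (Fin n)) (p : MvPolynomial (Fin n) ℂ),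
        e (Ideal.Quotient.mk (symIdeal n) (MvPolynomial.rename ⇑σ p)) =
          MonoidAlgebra.single σ (1 : ℂ) *
            e (Ideal.Quotient.mk (symIdeal n) p)) ∧
    Module.finrank ℂ (MvPolynomial (Fin n) ℂ ⧸ symIdeal n) = Nat.factorial n := by
  constructor
  · refine ⟨(ChevAux.PsiEquiv n).trans (ChevAux.iota n), fun σ p => ?_⟩
    rw [LinearEquiv.trans_apply, LinearEquiv.trans_apply, ChevAux.PsiEquiv_mk,
      ChevAux.PsiEquiv_mk, ChevAux.Psi_equivariant, ChevAux.iota_rho]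
  · exact ChevAux.finrankV n
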